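/- Assume x̄ ≠ 0 and ε̃ ≥ 0. Then 0 is a strict local maximizer of g: there exists δ > 0 such that g(x) < g(0) for every x ∈ ℝⁿ with 0 < ‖x‖ < δ. -/
import Mathlib


open scoped RealInnerProductSpace BigOperators

/-- The expectation `g` of the noisy phase-retrieval objective (up to an additive constant). -/
noncomputable def gObj (n : ℕ) (xbar : EuclideanSpace ℝ (Fin n)) (εt : ℝ)
    (x : EuclideanSpace ℝ (Fin n)) : ℝ :=
  (3 / 4) * (‖x‖ ^ 4 + ‖xbar‖ ^ 4) - (1 / 2) * ‖xbar‖ ^ 2 * ‖x‖ ^ 2 - ⟪xbar, x⟫ ^ 2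
    - (εt / 2) * (‖x‖ ^ 2 - ‖xbar‖ ^ 2)

/-- The gradient of `g`. -/
noncomputable def gGrad (n : ℕ) (xbar : EuclideanSpace ℝ (Fin n)) (εt : ℝ)
    (x : EuclideanSpace ℝ (Fin n)) : EuclideanSpace ℝ (Fin n) :=
  (3 * ‖x‖ ^ 2) • x - (2 * ⟪xbar, x⟫) • xbar - (‖xbar‖ ^ 2 + εt) • x

/-- `0` is a strict local maximizer of `g`. -/
theorem stmt8 (n : ℕ) (xbar : EuclideanSpace ℝ (Fin n)) (hxbar : xbar ≠ 0)
    (εt : ℝ) (hεt : 0 ≤ εt) :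
    ∃ δ > (0 : ℝ), ∀ x : EuclideanSpace ℝ (Fin n),
      0 < ‖x‖ → ‖x‖ < δ → gObj n xbar εt x < gObj n xbar εt 0 := by
  refine ⟨‖xbar‖ / 2, by have := norm_pos_iff.mpr hxbar; linarith, fun x hx hxδ => ?_⟩
  have hxb : 0 < ‖xbar‖ := norm_pos_iff.mpr hxbar
  have hip : (0:ℝ) ≤ ⟪xbar, x⟫ ^ 2 := sq_nonneg _
  simp only [gObj, norm_zero, inner_zero_right]
  nlinarith [sq_nonneg ‖x‖, sq_nonneg ‖xbar‖, mul_pos hx hx,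
    mul_lt_mul_of_pos_left hxδ hx, sq_nonneg (‖x‖*‖x‖), mul_pos hxb hx]
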